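/- Let Ω ⊂ ℝ^d be an open bounded convex set and x, y ∈ Ω distinct. Then log(‖x − b(x,y)‖ / ‖y − b(x,y)‖) = sup_π log(d(x,π)/d(y,π)), where the supremum is over all supporting hyperplanes π of Ω. -/

import Mathlib

/-- The affine hyperplane {p : ⟪ν, p⟫ = c}. -/
def hyperplane {d : ℕ} (ν : EuclideanSpace ℝ (Fin d)) (c : ℝ) :
    Set (EuclideanSpace ℝ (Fin d)) :=
  {p | (inner ℝ ν p : ℝ) = c}

/-- The hyperplane {⟪ν,·⟫ = c} (with unit normal ν) supports Ω: Ω lies in the closed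
half-space {⟪ν,·⟫ ≤ c} and the hyperplane touches the closure of Ω. -/
def IsSupporting {d : ℕ} (Ω : Set (EuclideanSpace ℝ (Fin d)))
    (ν : EuclideanSpace ℝ (Fin d)) (c : ℝ) : Prop :=
  ‖ν‖ = 1 ∧ (∀ p ∈ Ω, (inner ℝ ν p : ℝ) ≤ c) ∧ ∃ b ∈ closure Ω, (inner ℝ ν b : ℝ) = c

lemma infDist_hyperplane {d : ℕ} (ν p : EuclideanSpace ℝ (Fin d)) (c : ℝ) (hν : ‖ν‖ = 1) :
    Metric.infDist p (hyperplane ν c) = |(inner ℝ ν p : ℝ) - c| := by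
  have hmem : c • ν ∈ hyperplane ν c := by
    show (inner ℝ ν (c • ν) : ℝ) = c
    rw [real_inner_smul_right, real_inner_self_eq_norm_sq, hν]; ring
  have hne : (hyperplane ν c).Nonempty := ⟨c • ν, hmem⟩
  apply le_antisymm
  · have hq : p + (c - (inner ℝ ν p : ℝ)) • ν ∈ hyperplane ν c := by
      show (inner ℝ ν (p + (c - (inner ℝ ν p : ℝ)) • ν) : ℝ) = c
      rw [inner_add_right, real_inner_smul_right, real_inner_self_eq_norm_sq, hν]; ring
    calc Metric.infDist p (hyperplane ν c)
        ≤ dist p (p + (c - (inner ℝ ν p : ℝ)) • ν) := Metric.infDist_le_dist_of_mem hq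
      _ = |(inner ℝ ν p : ℝ) - c| := by
          rw [dist_eq_norm]
          simp [norm_smul, hν, abs_sub_comm]
  · by_contra hcon
    push_neg at hcon
    obtain ⟨q, hq, hlt⟩ := (Metric.infDist_lt_iff hne).1 hcon
    have h1 : |(inner ℝ ν p : ℝ) - c| = |(inner ℝ ν (p - q) : ℝ)| := by
      rw [inner_sub_right, hq]
    have h2 : |(inner ℝ ν (p - q) : ℝ)| ≤ dist p q :=
      calc |(inner ℝ ν (p - q) : ℝ)| ≤ ‖ν‖ * ‖p - q‖ := abs_real_inner_le_norm _ _
        _ = dist p q := by rw [hν, one_mul, dist_eq_norm]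
    rw [h1] at hlt
    linarith

lemma inner_lt_of_supporting {d : ℕ} {Ω : Set (EuclideanSpace ℝ (Fin d))}
    (hΩo : IsOpen Ω) {ν : EuclideanSpace ℝ (Fin d)} {c : ℝ}
    (h : IsSupporting Ω ν c) {p : EuclideanSpace ℝ (Fin d)} (hp : p ∈ Ω) :
    (inner ℝ ν p : ℝ) < c := by
  obtain ⟨ε, hε, hball⟩ := Metric.isOpen_iff.1 hΩo p hp
  have hq : p + (ε / 2) • ν ∈ Ω := by
    apply hball
    rw [Metric.mem_ball, dist_eq_norm]
    have : p + (ε / 2) • ν - p = (ε / 2) • ν := by abel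
    rw [this, norm_smul, Real.norm_eq_abs, h.1, abs_of_pos (half_pos hε)]
    linarith
  have := h.2.1 _ hq
  rw [inner_add_right, real_inner_smul_right, real_inner_self_eq_norm_sq, h.1] at this
  nlinarith

theorem stmt4 {d : ℕ} (Ω : Set (EuclideanSpace ℝ (Fin d)))
    (hΩo : IsOpen Ω) (hΩb : Bornology.IsBounded Ω) (hΩc : Convex ℝ Ω)
    (x y : EuclideanSpace ℝ (Fin d)) (hx : x ∈ Ω) (hy : y ∈ Ω) (hxy : x ≠ y)
    (bxy : EuclideanSpace ℝ (Fin d)) (hbf : bxy ∈ frontier Ω)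
    (t : ℝ) (ht : 1 < t) (hbeq : bxy = x + t • (y - x)) :
    Real.log (‖x - bxy‖ / ‖y - bxy‖) =
      sSup {r : ℝ | ∃ ν c, IsSupporting Ω ν c ∧
        r = Real.log (Metric.infDist x (hyperplane ν c) /
              Metric.infDist y (hyperplane ν c))} := by
  have ht0 : (0:ℝ) < t := by linarith
  have ht1 : (0:ℝ) < t - 1 := by linarith
  have hyx : ‖y - x‖ ≠ 0 := by
    simp only [ne_eq, norm_eq_zero, sub_eq_zero]
    exact fun h => hxy h.symm
  -- LHS computation
  have hxb : x - bxy = -(t • (y - x)) := by rw [hbeq]; abel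
  have hyb : y - bxy = (1 - t) • (y - x) := by
    rw [hbeq, sub_smul, one_smul]; abel
  have hnx : ‖x - bxy‖ = t * ‖y - x‖ := by
    rw [hxb, norm_neg, norm_smul, Real.norm_eq_abs, abs_of_pos ht0]
  have hny : ‖y - bxy‖ = (t - 1) * ‖y - x‖ := by
    rw [hyb, norm_smul, Real.norm_eq_abs]
    rw [abs_of_neg (by linarith)]
    ring_nf
  have hLHS : ‖x - bxy‖ / ‖y - bxy‖ = t / (t - 1) := by
    rw [hnx, hny, mul_div_mul_right _ _ hyx]
  -- closure of Ω inside half-space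
  have hclos : ∀ ν c, IsSupporting Ω ν c → ∀ q ∈ closure Ω, (inner ℝ ν q : ℝ) ≤ c := by
    intro ν c hs q hq
    have hsub : closure Ω ⊆ {q | (inner ℝ ν q : ℝ) ≤ c} :=
      closure_minimal (fun p hp => hs.2.1 p hp)
        (isClosed_le (Continuous.inner continuous_const continuous_id) continuous_const)
    exact hsub hq
  set S : Set ℝ := {r : ℝ | ∃ ν c, IsSupporting Ω ν c ∧
      r = Real.log (Metric.infDist x (hyperplane ν c) /
            Metric.infDist y (hyperplane ν c))} with hS
  have hbc : bxy ∈ closure Ω := hbf.1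
  have hbno : bxy ∉ Ω := by
    rw [hΩo.frontier_eq] at hbf
    exact hbf.2
  -- upper bound
  have hub : ∀ r ∈ S, r ≤ Real.log (t / (t - 1)) := by
    rintro r ⟨ν, c, hs, rfl⟩
    have hu : (inner ℝ ν x : ℝ) < c := inner_lt_of_supporting hΩo hs hx
    have hv : (inner ℝ ν y : ℝ) < c := inner_lt_of_supporting hΩo hs hy
    have hb : (inner ℝ ν bxy : ℝ) ≤ c := hclos ν c hs bxy hbc
    rw [infDist_hyperplane _ _ _ hs.1, infDist_hyperplane _ _ _ hs.1,
      abs_of_neg (by linarith), abs_of_neg (by linarith)]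
    have hbin : (inner ℝ ν bxy : ℝ) = (inner ℝ ν x : ℝ) + t * ((inner ℝ ν y : ℝ) - (inner ℝ ν x : ℝ)) := by
      rw [hbeq, inner_add_right, real_inner_smul_right, inner_sub_right]
    have hratio : (-((inner ℝ ν x : ℝ) - c)) / (-((inner ℝ ν y : ℝ) - c)) ≤ t / (t - 1) := by
      rw [div_le_div_iff₀ (by linarith) ht1]
      nlinarith
    rw [neg_sub, neg_sub] at hratio ⊢
    have hpos : (0:ℝ) < (c - (inner ℝ ν x : ℝ)) / (c - (inner ℝ ν y : ℝ)) :=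
      div_pos (by linarith) (by linarith)
    exact (Real.log_le_log_iff hpos (div_pos ht0 ht1)).2 hratio
  -- membership: supporting hyperplane at bxy
  obtain ⟨f, hf⟩ := geometric_hahn_banach_open_point hΩc hΩo hbno
  set ν₀ : EuclideanSpace ℝ (Fin d) := (InnerProductSpace.toDual ℝ _).symm f with hν₀
  have hinner : ∀ p, (inner ℝ ν₀ p : ℝ) = f p := fun p =>
    InnerProductSpace.toDual_symm_apply
  have hν₀ne : ν₀ ≠ 0 := by
    intro h0
    have := hf x hx
    have h1 := hinner x
    have h2 := hinner bxy
    rw [h0] at h1 h2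
    simp at h1 h2
    linarith [h1, h2]
  have hn0 : (0:ℝ) < ‖ν₀‖ := norm_pos_iff.2 hν₀ne
  set ν : EuclideanSpace ℝ (Fin d) := ‖ν₀‖⁻¹ • ν₀ with hνdef
  set c : ℝ := (inner ℝ ν bxy : ℝ) with hcdef
  have hνn : ‖ν‖ = 1 := by
    rw [hνdef, norm_smul, norm_inv, norm_norm, inv_mul_cancel₀ hn0.ne']
  have hνp : ∀ p, (inner ℝ ν p : ℝ) = ‖ν₀‖⁻¹ * f p := by
    intro p
    rw [hνdef, real_inner_smul_left, hinner]
  have hsupp : IsSupporting Ω ν c := by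
    refine ⟨hνn, ?_, bxy, hbc, rfl⟩
    intro p hp
    rw [hcdef, hνp, hνp]
    exact mul_le_mul_of_nonneg_left (hf p hp).le (inv_nonneg.2 hn0.le)
  have hmem : Real.log (t / (t - 1)) ∈ S := by
    refine ⟨ν, c, hsupp, ?_⟩
    have hu : (inner ℝ ν x : ℝ) < c := inner_lt_of_supporting hΩo hsupp hx
    have hv : (inner ℝ ν y : ℝ) < c := inner_lt_of_supporting hΩo hsupp hy
    have hbin : c = (inner ℝ ν x : ℝ) + t * ((inner ℝ ν y : ℝ) - (inner ℝ ν x : ℝ)) := by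
      rw [hcdef, hbeq, inner_add_right, real_inner_smul_right, inner_sub_right]
    rw [infDist_hyperplane _ _ _ hνn, infDist_hyperplane _ _ _ hνn,
      abs_of_neg (by linarith), abs_of_neg (by linarith)]
    rw [neg_sub, neg_sub]
    congr 1
    have hvu : (0:ℝ) < (inner ℝ ν y : ℝ) - (inner ℝ ν x : ℝ) := by nlinarith
    rw [div_eq_div_iff (ne_of_gt ht1) (ne_of_gt (show (0:ℝ) < c - (inner ℝ ν y : ℝ) by linarith))]
    nlinarith
  rw [hLHS]
  exact le_antisymm (le_csSup ⟨_, hub⟩ hmem) (csSup_le ⟨_, hmem⟩ hub)
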